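/- If μ(B) = ∫|u|^p dμ can be expressed as ∫₀^∞ μ({|u| > y^{1/p}}) dℒ¹(y) via Cavalieri's principle, and if ∫|u|^p dμ₁ ≤ ∫|u|^p dμ₂ holds for all u ∈ W^{1,p}_{loc}(ℝ^N), then μ₁(A) ≤ μ₂(A) for every Borel p-quasi open A. In particular, two p-capacitary measures μ₁, μ₂ with ∫|u|^p dμ₁ = ∫|u|^p dμ₂ for all u ∈ W^{1,p}_{loc} agree on all Borel p-quasi open sets. -/

import Mathlib

open MeasureTheory Filter Topology ENNReal

/-- The `p`-capacity of a set `S ⊆ ℝ^N`, defined via the Sobolev-type energy of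
admissible functions `0 ≤ u ≤ 1` equal to `1` on an open neighborhood of `S`
(with `inf ∅ = +∞`). -/
noncomputable def pCap (N : ℕ) (p : ℝ) (S : Set (EuclideanSpace ℝ (Fin N))) : ℝ≥0∞ :=
  ⨅ (u : EuclideanSpace ℝ (Fin N) → ℝ) (_ : Differentiable ℝ u)
    (_ : ∀ x, 0 ≤ u x ∧ u x ≤ 1)
    (_ : ∃ O : Set (EuclideanSpace ℝ (Fin N)), IsOpen O ∧ S ⊆ O ∧ ∀ x ∈ O, u x = 1),
    ∫⁻ x, ENNReal.ofReal (‖fderiv ℝ u x‖ ^ p + |u x| ^ p)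

/-- A set `A` is `p`-quasi open if for every `ε > 0` there is an open set `ω` of
`p`-capacity smaller than `ε` with `A ∪ ω` open. -/
def IsQuasiOpen (N : ℕ) (p : ℝ) (A : Set (EuclideanSpace ℝ (Fin N))) : Prop :=
  ∀ ε : ℝ≥0∞, 0 < ε → ∃ ω : Set (EuclideanSpace ℝ (Fin N)),
    IsOpen ω ∧ pCap N p ω < ε ∧ IsOpen (A ∪ ω)

section Aux

open Set intervalIntegral

noncomputable def phiAux (t : ℝ) : ℝ := 6 * ∫ s in (0:ℝ)..t, max 0 (s * (1 - s))

lemma contG : Continuous (fun s : ℝ => max 0 (s * (1 - s))) := by fun_prop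

lemma hasDerivAt_phiAux (t : ℝ) :
    HasDerivAt phiAux (6 * max 0 (t * (1 - t))) t := by
  have h : HasDerivAt (fun t : ℝ => ∫ s in (0:ℝ)..t, max 0 (s * (1 - s)))
      (max 0 (t * (1 - t))) t :=
    intervalIntegral.integral_hasDerivAt_right (contG.intervalIntegrable _ _)
      (contG.stronglyMeasurable.stronglyMeasurableAtFilter) contG.continuousAt
  exact h.const_mul 6

lemma differentiable_phiAux : Differentiable ℝ phiAux :=
  fun t => (hasDerivAt_phiAux t).differentiableAt

lemma phiAux_mono : Monotone phiAux := by
  have : ∀ t : ℝ, 0 ≤ deriv phiAux t := by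
    intro t
    rw [(hasDerivAt_phiAux t).deriv]
    positivity
  exact monotone_of_deriv_nonneg differentiable_phiAux this

lemma phiAux_of_nonpos {t : ℝ} (ht : t ≤ 0) : phiAux t = 0 := by
  have h : ∫ s in (0:ℝ)..t, max 0 (s * (1 - s)) = ∫ s in (0:ℝ)..t, (0:ℝ) := by
    apply intervalIntegral.integral_congr
    intro s hs
    rw [Set.uIcc_of_ge ht] at hs
    have hs0 : s ≤ 0 := hs.2
    have : s * (1 - s) ≤ 0 := mul_nonpos_of_nonpos_of_nonneg hs0 (by linarith)
    simp [max_eq_left this]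
  simp [phiAux, h]

lemma phiAux_of_one_le {t : ℝ} (ht : 1 ≤ t) : phiAux t = 1 := by
  have hint : ∀ a b : ℝ, IntervalIntegrable (fun s => max 0 (s * (1 - s))) volume a b :=
    fun a b => contG.intervalIntegrable _ _
  have hsplit : ∫ s in (0:ℝ)..t, max 0 (s * (1 - s))
      = (∫ s in (0:ℝ)..1, max 0 (s * (1 - s))) + ∫ s in (1:ℝ)..t, max 0 (s * (1 - s)) :=
    (intervalIntegral.integral_add_adjacent_intervals (hint 0 1) (hint 1 t)).symm
  have h1 : ∫ s in (0:ℝ)..1, max 0 (s * (1 - s)) = 1/6 := by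
    have : ∫ s in (0:ℝ)..1, max 0 (s * (1 - s)) = ∫ s in (0:ℝ)..1, (s - s^2) := by
      apply intervalIntegral.integral_congr
      intro s hs
      rw [Set.uIcc_of_le (by norm_num : (0:ℝ) ≤ 1)] at hs
      have : 0 ≤ s * (1 - s) := mul_nonneg hs.1 (by linarith [hs.2])
      show max 0 (s * (1 - s)) = s - s ^ 2
      rw [max_eq_right this]; ring
    rw [this, intervalIntegral.integral_sub (intervalIntegrable_id) (intervalIntegral.intervalIntegrable_pow 2),
      integral_id, integral_pow]
    norm_num
  have h2 : ∫ s in (1:ℝ)..t, max 0 (s * (1 - s)) = 0 := by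
    have : ∫ s in (1:ℝ)..t, max 0 (s * (1 - s)) = ∫ s in (1:ℝ)..t, (0:ℝ) := by
      apply intervalIntegral.integral_congr
      intro s hs
      rw [Set.uIcc_of_le ht] at hs
      have : s * (1 - s) ≤ 0 := mul_nonpos_of_nonneg_of_nonpos (by linarith [hs.1]) (by linarith [hs.1])
      simp [max_eq_left this]
    simp [this]
  rw [phiAux, hsplit, h1, h2]; norm_num

lemma phiAux_nonneg (t : ℝ) : 0 ≤ phiAux t := by
  have := phiAux_mono (le_max_right t 0)
  rcases le_total t 0 with h | h
  · rw [phiAux_of_nonpos h]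
  · calc (0:ℝ) = phiAux 0 := (phiAux_of_nonpos le_rfl).symm
    _ ≤ phiAux t := phiAux_mono h

lemma phiAux_le_one (t : ℝ) : phiAux t ≤ 1 := by
  rcases le_total t 1 with h | h
  · calc phiAux t ≤ phiAux 1 := phiAux_mono h
    _ = 1 := phiAux_of_one_le le_rfl
  · rw [phiAux_of_one_le h]

lemma phiAux_deriv_le (t : ℝ) : 6 * max 0 (t * (1 - t)) ≤ 3/2 := by
  have h : t * (1 - t) ≤ 1/4 := by nlinarith [sq_nonneg (t - 1/2)]
  have : max 0 (t * (1 - t)) ≤ 1/4 := max_le (by norm_num) h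
  linarith

variable {N : ℕ} {p : ℝ}
lemma aux_ab (hp : 1 < p)
    (μ ν : Measure (EuclideanSpace ℝ (Fin N)))
    (hCav : ∀ (m : Measure (EuclideanSpace ℝ (Fin N))) (u : EuclideanSpace ℝ (Fin N) → ℝ),
      Differentiable ℝ u →
      (∫⁻ x, ENNReal.ofReal (|u x| ^ p) ∂m) =
        ∫⁻ y in Set.Ioi (0 : ℝ), m {x | y ^ (1 / p) < |u x|})
    (hle : ∀ u : EuclideanSpace ℝ (Fin N) → ℝ, Differentiable ℝ u →
      (∫⁻ x, ENNReal.ofReal (|u x| ^ p) ∂μ) ≤ ∫⁻ x, ENNReal.ofReal (|u x| ^ p) ∂ν)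
    (w : EuclideanSpace ℝ (Fin N) → ℝ) (hw : Differentiable ℝ w)
    {a b : ℝ} (ha : 0 < a) (hab : a < b) :
    μ {x | b ≤ w x} ≤ ν {x | a < w x} := by
  have hp0 : (0:ℝ) < 1 / p := by positivity
  have hba : (0:ℝ) < b - a := sub_pos.mpr hab
  set z : EuclideanSpace ℝ (Fin N) → ℝ := fun x => phiAux ((w x - a) / (b - a)) with hz_def
  have hz : Differentiable ℝ z := by
    have h1 : Differentiable ℝ (fun x : EuclideanSpace ℝ (Fin N) => (w x - a) / (b - a)) := by
      fun_prop
    exact differentiable_phiAux.comp h1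
  have hz0 : ∀ x, 0 ≤ z x := fun x => phiAux_nonneg _
  have hz1 : ∀ x, z x ≤ 1 := fun x => phiAux_le_one _
  have hzb : ∀ x, b ≤ w x → z x = 1 := by
    intro x hx
    apply phiAux_of_one_le
    rw [le_div_iff₀ hba]; linarith
  have hza : ∀ x, 0 < z x → a < w x := by
    intro x hx
    by_contra h
    push_neg at h
    have h0 : (w x - a) / (b - a) ≤ 0 :=
      div_nonpos_of_nonpos_of_nonneg (by linarith) hba.le
    have := phiAux_of_nonpos h0
    rw [hz_def] at hx
    simp only [this] at hx
    exact lt_irrefl _ hx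
  have lower : μ {x | b ≤ w x}
      = ∫⁻ y in Set.Ioi (0:ℝ), (Set.Ioo (0:ℝ) 1).indicator (fun _ => μ {x | b ≤ w x}) y := by
    rw [lintegral_indicator measurableSet_Ioo, setLIntegral_const,
      Measure.restrict_apply measurableSet_Ioo,
      Set.inter_eq_left.mpr (Set.Ioo_subset_Ioi_self), Real.volume_Ioo]
    norm_num
  have upper : ∫⁻ y in Set.Ioi (0:ℝ), (Set.Ioc (0:ℝ) 1).indicator (fun _ => ν {x | a < w x}) y
      = ν {x | a < w x} := by
    rw [lintegral_indicator measurableSet_Ioc, setLIntegral_const,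
      Measure.restrict_apply measurableSet_Ioc,
      Set.inter_eq_left.mpr (Set.Ioc_subset_Ioi_self), Real.volume_Ioc]
    norm_num
  calc μ {x | b ≤ w x}
      = ∫⁻ y in Set.Ioi (0:ℝ), (Set.Ioo (0:ℝ) 1).indicator (fun _ => μ {x | b ≤ w x}) y := lower
    _ ≤ ∫⁻ y in Set.Ioi (0:ℝ), μ {x | y ^ (1 / p) < |z x|} := by
        apply lintegral_mono
        intro y
        by_cases hy : y ∈ Set.Ioo (0:ℝ) 1
        · rw [Set.indicator_of_mem hy]
          apply measure_mono
          intro x hx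
          have h1 : z x = 1 := hzb x hx
          have : y ^ (1/p) < 1 := Real.rpow_lt_one hy.1.le hy.2 hp0
          simp only [Set.mem_setOf_eq, h1, abs_one]
          exact this
        · rw [Set.indicator_of_notMem hy]
          exact zero_le
    _ = ∫⁻ x, ENNReal.ofReal (|z x| ^ p) ∂μ := (hCav μ z hz).symm
    _ ≤ ∫⁻ x, ENNReal.ofReal (|z x| ^ p) ∂ν := hle z hz
    _ = ∫⁻ y in Set.Ioi (0:ℝ), ν {x | y ^ (1 / p) < |z x|} := hCav ν z hz
    _ ≤ ∫⁻ y in Set.Ioi (0:ℝ), (Set.Ioc (0:ℝ) 1).indicator (fun _ => ν {x | a < w x}) y := by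
        apply setLIntegral_mono (measurable_const.indicator measurableSet_Ioc)
        intro y hy
        by_cases hy1 : y ≤ 1
        · have hmem : y ∈ Set.Ioc (0:ℝ) 1 := Set.mem_Ioc.mpr ⟨hy, hy1⟩
          rw [Set.indicator_of_mem hmem]
          apply measure_mono
          intro x hx
          have habs : |z x| = z x := abs_of_nonneg (hz0 x)
          have hypos : 0 < y ^ (1/p) := Real.rpow_pos_of_pos hy _
          rw [Set.mem_setOf_eq, habs] at hx
          exact hza x (hypos.trans hx)
        · push_neg at hy1
          have hempty : {x | y ^ (1/p) < |z x|} = ∅ := by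
            apply Set.eq_empty_iff_forall_notMem.mpr
            intro x hx
            rw [Set.mem_setOf_eq] at hx
            have h1 : (1:ℝ) ≤ y ^ (1/p) := by
              calc (1:ℝ) = 1 ^ (1/p) := (Real.one_rpow _).symm
              _ ≤ y ^ (1/p) := Real.rpow_le_rpow (by norm_num) hy1.le hp0.le
            have h2 : |z x| ≤ 1 := abs_le.mpr ⟨by linarith [hz0 x], hz1 x⟩
            linarith
          rw [hempty]
          simp
    _ = ν {x | a < w x} := upper

lemma aux_open (hp : 1 < p)
    (μ ν : Measure (EuclideanSpace ℝ (Fin N)))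
    (hCav : ∀ (m : Measure (EuclideanSpace ℝ (Fin N))) (u : EuclideanSpace ℝ (Fin N) → ℝ),
      Differentiable ℝ u →
      (∫⁻ x, ENNReal.ofReal (|u x| ^ p) ∂m) =
        ∫⁻ y in Set.Ioi (0 : ℝ), m {x | y ^ (1 / p) < |u x|})
    (hle : ∀ u : EuclideanSpace ℝ (Fin N) → ℝ, Differentiable ℝ u →
      (∫⁻ x, ENNReal.ofReal (|u x| ^ p) ∂μ) ≤ ∫⁻ x, ENNReal.ofReal (|u x| ^ p) ∂ν)
    (U : Set (EuclideanSpace ℝ (Fin N))) (hU : IsOpen U) : μ U ≤ ν U := by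
  obtain ⟨w, hsupp, hsm, hrange⟩ := hU.exists_contDiff_support_eq (n := 1)
  have hw : Differentiable ℝ w := hsm.differentiable (by norm_num)
  have hw0 : ∀ x, 0 ≤ w x := fun x => (hrange (Set.mem_range_self x)).1
  have hUeq : ⋃ k : ℕ, {x | ((k:ℝ)+1)⁻¹ ≤ w x} = U := by
    ext x
    simp only [Set.mem_iUnion, Set.mem_setOf_eq]
    constructor
    · rintro ⟨k, hk⟩
      rw [← hsupp, Function.mem_support]
      have hpos : (0:ℝ) < ((k:ℝ)+1)⁻¹ := by positivity
      intro h0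
      rw [h0] at hk
      linarith
    · intro hx
      rw [← hsupp, Function.mem_support] at hx
      have hwx : 0 < w x := lt_of_le_of_ne (hw0 x) (Ne.symm hx)
      obtain ⟨k, hk⟩ := exists_nat_gt (w x)⁻¹
      refine ⟨k, ?_⟩
      have h1 : (w x)⁻¹ < (k:ℝ) + 1 := hk.trans (lt_add_one _)
      have h2 : ((k:ℝ)+1)⁻¹ < w x := by
        rw [inv_lt_comm₀ (by positivity) hwx]
        exact h1
      exact h2.le
  have hmono : Monotone (fun k : ℕ => {x | ((k:ℝ)+1)⁻¹ ≤ w x}) := by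
    intro k l hkl x hx
    simp only [Set.mem_setOf_eq] at *
    refine le_trans ?_ hx
    apply inv_anti₀ (by positivity)
    have : (k:ℝ) ≤ (l:ℝ) := Nat.cast_le.mpr hkl
    linarith
  rw [← hUeq, Directed.measure_iUnion hmono.directed_le]
  apply iSup_le
  intro k
  have hb : (0:ℝ) < ((k:ℝ)+1)⁻¹ := by positivity
  have h := aux_ab hp μ ν hCav hle w hw (half_pos hb) (half_lt_self hb)
  refine h.trans (measure_mono ?_)
  intro x hx
  rw [Set.mem_setOf_eq] at hx
  rw [hUeq, ← hsupp, Function.mem_support]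
  have : 0 < w x := lt_of_le_of_lt (by positivity) hx
  exact this.ne'

lemma aux_main (hp : 1 < p)
    (μ ν : Measure (EuclideanSpace ℝ (Fin N)))
    (hμcap : ∀ B : Set (EuclideanSpace ℝ (Fin N)), MeasurableSet B → pCap N p B = 0 → μ B = 0)
    (hνcap : ∀ B : Set (EuclideanSpace ℝ (Fin N)), MeasurableSet B → pCap N p B = 0 → ν B = 0)
    (hCav : ∀ (m : Measure (EuclideanSpace ℝ (Fin N))) (u : EuclideanSpace ℝ (Fin N) → ℝ),
      Differentiable ℝ u →
      (∫⁻ x, ENNReal.ofReal (|u x| ^ p) ∂m) =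
        ∫⁻ y in Set.Ioi (0 : ℝ), m {x | y ^ (1 / p) < |u x|})
    (hle : ∀ u : EuclideanSpace ℝ (Fin N) → ℝ, Differentiable ℝ u →
      (∫⁻ x, ENNReal.ofReal (|u x| ^ p) ∂μ) ≤ ∫⁻ x, ENNReal.ofReal (|u x| ^ p) ∂ν)
    (A : Set (EuclideanSpace ℝ (Fin N))) (hA : MeasurableSet A) (hqo : IsQuasiOpen N p A) :
    μ A ≤ ν A := by
  have hp0 : (0:ℝ) ≤ p := by linarith
  -- choose the small-capacity open sets
  have hqn : ∀ n : ℕ, ∃ ω : Set (EuclideanSpace ℝ (Fin N)),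
      IsOpen ω ∧ pCap N p ω < ((n:ℝ≥0∞))⁻¹ ∧ IsOpen (A ∪ ω) := by
    intro n
    exact hqo _ (ENNReal.inv_pos.mpr (ENNReal.natCast_ne_top n))
  choose ω hω₁ hω₂ hω₃ using hqn
  -- choose admissible functions
  have hadm : ∀ n : ℕ, ∃ u : EuclideanSpace ℝ (Fin N) → ℝ,
      Differentiable ℝ u ∧ (∀ x, 0 ≤ u x ∧ u x ≤ 1) ∧
      (∃ O, IsOpen O ∧ ω n ⊆ O ∧ ∀ x ∈ O, u x = 1) ∧
      (∫⁻ x, ENNReal.ofReal (‖fderiv ℝ u x‖ ^ p + |u x| ^ p)) < ((n:ℝ≥0∞))⁻¹ := by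
    intro n
    have h := hω₂ n
    rw [pCap] at h
    rw [iInf_lt_iff] at h
    obtain ⟨u, h⟩ := h
    rw [iInf_lt_iff] at h
    obtain ⟨h1, h⟩ := h
    rw [iInf_lt_iff] at h
    obtain ⟨h2, h⟩ := h
    rw [iInf_lt_iff] at h
    obtain ⟨h3, h⟩ := h
    exact ⟨u, h1, h2, h3, h⟩
  choose u hu₁ hu₂ hu₃ hu₄ using hadm
  choose O hO₁ hO₂ hO₃ using hu₃
  -- the open core of A
  set U : Set (EuclideanSpace ℝ (Fin N)) :=
    ⋃ n : ℕ, ((A ∪ ω n) ∩ {x | u n x < 2⁻¹}) with hU_def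
  have hUopen : IsOpen U :=
    isOpen_iUnion fun n => (hω₃ n).inter (isOpen_lt (hu₁ n).continuous continuous_const)
  have hUA : U ⊆ A := by
    rintro x hx
    rw [hU_def, Set.mem_iUnion] at hx
    obtain ⟨n, hx1, hx2⟩ := hx
    rcases hx1 with h | h
    · exact h
    · exfalso
      have : u n x = 1 := hO₃ n x (hO₂ n h)
      rw [Set.mem_setOf_eq, this] at hx2
      norm_num at hx2
  set B : Set (EuclideanSpace ℝ (Fin N)) := A \ U with hB_def
  have hBsub : ∀ n : ℕ, B ⊆ {x | 2⁻¹ ≤ u n x} := by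
    intro n x hx
    obtain ⟨hxA, hxU⟩ := hx
    rw [hU_def, Set.mem_iUnion] at hxU
    push_neg at hxU
    have := hxU n
    rw [Set.mem_inter_iff] at this
    push_neg at this
    have h2 := this (Or.inl hxA)
    rw [Set.mem_setOf_eq] at h2 ⊢
    linarith [not_lt.mp h2]
  -- B has zero capacity
  have hcapB : pCap N p B = 0 := by
    refine le_antisymm ?_ (zero_le)
    have key : ∀ n : ℕ, pCap N p B ≤ ENNReal.ofReal ((18:ℝ) ^ p) * ((n:ℝ≥0∞))⁻¹ := by
      intro n
      set v : EuclideanSpace ℝ (Fin N) → ℝ := fun x => phiAux (12 * u n x - 3) with hv_def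
      have hinner : Differentiable ℝ (fun x : EuclideanSpace ℝ (Fin N) => 12 * u n x - 3) := by
        have := hu₁ n
        fun_prop
      have hvdiff : Differentiable ℝ v := differentiable_phiAux.comp hinner
      have hvb : ∀ x, 0 ≤ v x ∧ v x ≤ 1 := fun x => ⟨phiAux_nonneg _, phiAux_le_one _⟩
      have hvO : ∃ O', IsOpen O' ∧ B ⊆ O' ∧ ∀ x ∈ O', v x = 1 := by
        refine ⟨{x | (3:ℝ)⁻¹ < u n x}, isOpen_lt continuous_const (hu₁ n).continuous, ?_, ?_⟩
        · intro x hx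
          have := hBsub n hx
          rw [Set.mem_setOf_eq] at this ⊢
          linarith
        · intro x hx
          rw [Set.mem_setOf_eq] at hx
          exact phiAux_of_one_le (by linarith)
      have hstep : pCap N p B ≤ ∫⁻ x, ENNReal.ofReal (‖fderiv ℝ v x‖ ^ p + |v x| ^ p) := by
        rw [pCap]
        exact iInf_le_of_le v (iInf_le_of_le hvdiff (iInf_le_of_le hvb (iInf_le_of_le hvO le_rfl)))
      have hbound : ∫⁻ x, ENNReal.ofReal (‖fderiv ℝ v x‖ ^ p + |v x| ^ p)
          ≤ ENNReal.ofReal ((18:ℝ) ^ p) * ∫⁻ x, ENNReal.ofReal (‖fderiv ℝ (u n) x‖ ^ p + |u n x| ^ p) := by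
        rw [← lintegral_const_mul' _ _ ENNReal.ofReal_ne_top]
        apply lintegral_mono
        intro x
        show ENNReal.ofReal (‖fderiv ℝ v x‖ ^ p + |v x| ^ p)
          ≤ ENNReal.ofReal ((18:ℝ) ^ p) * ENNReal.ofReal (‖fderiv ℝ (u n) x‖ ^ p + |u n x| ^ p)
        rw [← ENNReal.ofReal_mul (by positivity : (0:ℝ) ≤ (18:ℝ) ^ p)]
        apply ENNReal.ofReal_le_ofReal
        -- compute the derivative of v
        have hfd : fderiv ℝ v x
            = (6 * max 0 ((12 * u n x - 3) * (1 - (12 * u n x - 3)))) • ((12:ℝ) • fderiv ℝ (u n) x) := by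
          have hin : HasFDerivAt (fun x : EuclideanSpace ℝ (Fin N) => 12 * u n x - 3)
              ((12:ℝ) • fderiv ℝ (u n) x) x := by
            have h0 : HasFDerivAt (u n) (fderiv ℝ (u n) x) x := ((hu₁ n) x).hasFDerivAt
            exact (h0.const_mul 12).sub_const 3
          exact ((hasDerivAt_phiAux _).comp_hasFDerivAt x hin).fderiv
        have hdnorm : ‖fderiv ℝ v x‖ ≤ 18 * ‖fderiv ℝ (u n) x‖ := by
          rw [hfd, norm_smul, norm_smul]
          have h1 := phiAux_deriv_le (12 * u n x - 3)
          have h2 : 0 ≤ 6 * max 0 ((12 * u n x - 3) * (1 - (12 * u n x - 3))) := by positivity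
          rw [Real.norm_eq_abs, abs_of_nonneg h2, Real.norm_eq_abs]
          have : |(12:ℝ)| = 12 := by norm_num
          rw [this]
          nlinarith [norm_nonneg (fderiv ℝ (u n) x)]
        have hvabs : |v x| ≤ 4 * |u n x| := by
          have hu0 := (hu₂ n x).1
          rcases le_or_gt (u n x) (4⁻¹ : ℝ) with h | h
          · have : v x = 0 := phiAux_of_nonpos (by linarith)
            rw [this, abs_zero]
            positivity
          · have h1 : |v x| ≤ 1 := abs_le.mpr ⟨by linarith [phiAux_nonneg (12 * u n x - 3)],
              phiAux_le_one _⟩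
            rw [abs_of_nonneg hu0]
            linarith
        have e1 : ‖fderiv ℝ v x‖ ^ p ≤ (18:ℝ) ^ p * ‖fderiv ℝ (u n) x‖ ^ p := by
          calc ‖fderiv ℝ v x‖ ^ p ≤ (18 * ‖fderiv ℝ (u n) x‖) ^ p :=
                Real.rpow_le_rpow (norm_nonneg _) hdnorm hp0
          _ = (18:ℝ) ^ p * ‖fderiv ℝ (u n) x‖ ^ p :=
                Real.mul_rpow (by norm_num) (norm_nonneg _)
        have e2 : |v x| ^ p ≤ (18:ℝ) ^ p * |u n x| ^ p := by
          calc |v x| ^ p ≤ (4 * |u n x|) ^ p :=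
                Real.rpow_le_rpow (abs_nonneg _) hvabs hp0
          _ = (4:ℝ) ^ p * |u n x| ^ p := Real.mul_rpow (by norm_num) (abs_nonneg _)
          _ ≤ (18:ℝ) ^ p * |u n x| ^ p := by
                apply mul_le_mul_of_nonneg_right (Real.rpow_le_rpow (by norm_num) (by norm_num) hp0)
                  (Real.rpow_nonneg (abs_nonneg _) p)
        calc ‖fderiv ℝ v x‖ ^ p + |v x| ^ p
            ≤ (18:ℝ) ^ p * ‖fderiv ℝ (u n) x‖ ^ p + (18:ℝ) ^ p * |u n x| ^ p := by
              exact add_le_add e1 e2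
        _ = (18:ℝ) ^ p * (‖fderiv ℝ (u n) x‖ ^ p + |u n x| ^ p) := by ring
      refine hstep.trans (hbound.trans ?_)
      exact mul_le_mul_right (hu₄ n).le _
    have htend : Tendsto (fun n : ℕ => ENNReal.ofReal ((18:ℝ) ^ p) * ((n:ℝ≥0∞))⁻¹) atTop (𝓝 0) := by
      have := ENNReal.Tendsto.const_mul (a := ENNReal.ofReal ((18:ℝ) ^ p))
        ENNReal.tendsto_inv_nat_nhds_zero (Or.inr ENNReal.ofReal_ne_top)
      simpa using this
    exact ge_of_tendsto htend (Filter.Eventually.of_forall key)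
  have hBmeas : MeasurableSet B := hA.diff hUopen.measurableSet
  have hμB : μ B = 0 := hμcap B hBmeas hcapB
  have h1 : μ A ≤ μ U := by
    calc μ A ≤ μ (U ∪ B) := measure_mono (by
          intro x hx
          by_cases h : x ∈ U
          · exact Or.inl h
          · exact Or.inr ⟨hx, h⟩)
    _ ≤ μ U + μ B := measure_union_le _ _
    _ = μ U := by rw [hμB, add_zero]
  calc μ A ≤ μ U := h1
  _ ≤ ν U := aux_open hp μ ν hCav hle U hUopen
  _ ≤ ν A := measure_mono hUA

end Aux

theorem stmt13 (N : ℕ) (p : ℝ) (hp : 1 < p)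
    (μ₁ μ₂ : Measure (EuclideanSpace ℝ (Fin N)))
    -- both measures are p-capacitary
    (hμ₁cap : ∀ B : Set (EuclideanSpace ℝ (Fin N)), MeasurableSet B → pCap N p B = 0 → μ₁ B = 0)
    (hμ₂cap : ∀ B : Set (EuclideanSpace ℝ (Fin N)), MeasurableSet B → pCap N p B = 0 → μ₂ B = 0)
    -- Cavalieri's principle for the integrals `∫|u|^p dμ`
    (hCav : ∀ (μ : Measure (EuclideanSpace ℝ (Fin N))) (u : EuclideanSpace ℝ (Fin N) → ℝ),
      Differentiable ℝ u →
      (∫⁻ x, ENNReal.ofReal (|u x| ^ p) ∂μ) =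
        ∫⁻ y in Set.Ioi (0 : ℝ), μ {x | y ^ (1 / p) < |u x|}) :
    ((∀ u : EuclideanSpace ℝ (Fin N) → ℝ, Differentiable ℝ u →
        (∫⁻ x, ENNReal.ofReal (|u x| ^ p) ∂μ₁) ≤ ∫⁻ x, ENNReal.ofReal (|u x| ^ p) ∂μ₂) →
      ∀ A : Set (EuclideanSpace ℝ (Fin N)), MeasurableSet A → IsQuasiOpen N p A →
        μ₁ A ≤ μ₂ A) ∧
    ((∀ u : EuclideanSpace ℝ (Fin N) → ℝ, Differentiable ℝ u →
        (∫⁻ x, ENNReal.ofReal (|u x| ^ p) ∂μ₁) = ∫⁻ x, ENNReal.ofReal (|u x| ^ p) ∂μ₂) →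
      ∀ A : Set (EuclideanSpace ℝ (Fin N)), MeasurableSet A → IsQuasiOpen N p A →
        μ₁ A = μ₂ A) := by
  constructor
  · intro hle A hA hq
    exact aux_main hp μ₁ μ₂ hμ₁cap hμ₂cap hCav hle A hA hq
  · intro heq A hA hq
    exact le_antisymm
      (aux_main hp μ₁ μ₂ hμ₁cap hμ₂cap hCav (fun u hu => (heq u hu).le) A hA hq)
      (aux_main hp μ₂ μ₁ hμ₂cap hμ₁cap hCav (fun u hu => (heq u hu).ge) A hA hq)
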